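/- Let k be a perfect field of characteristic p, and let F : W(k) → W(k) be the Witt vector Frobenius automorphism. For a sequence (a_n) in W(k) which arises as the ghost components of a single Witt vector X ∈ W(W(k)), the image of X under the map W(pr_0) : W(W(k)) → W(k) induced by the zeroth component projection pr_0 : W(k) → k equals lim_{n→∞} F^{−n}(a_n) in the p-adic topology of W(k). -/

import Mathlib

open WittVector

section aux
variable (p : ℕ) [hp : Fact p.Prime]

lemma exists_verschiebung_eq {R : Type*} [CommRing R] (x : WittVector p R)
    (hx : x.coeff 0 = 0) : ∃ y : WittVector p R, WittVector.verschiebung y = x := by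
  refine ⟨WittVector.mk p (fun i => x.coeff (i + 1)), ?_⟩
  ext n
  cases n with
  | zero => rw [verschiebung_coeff_zero, hx]
  | succ n => rw [verschiebung_coeff_succ, coeff_mk]

variable (k : Type*) [Field k] [CharP k p] [PerfectRing k p]

lemma p_dvd_sub_teichmuller (x : WittVector p k) :
    (p : WittVector p k) ∣ x - WittVector.teichmuller p (x.coeff 0) := by
  set z := x - WittVector.teichmuller p (x.coeff 0) with hz
  have hz0 : z.coeff 0 = 0 := by
    have : WittVector.constantCoeff z = x.coeff 0 - x.coeff 0 := by
      rw [hz, map_sub]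
      simp [WittVector.constantCoeff_apply, teichmuller_coeff_zero]
    simpa using this
  rcases eq_or_ne z 0 with h | h
  · simp [h]
  · obtain ⟨m, b, hb0, hzb⟩ := WittVector.exists_eq_pow_p_mul z h
    cases m with
    | zero => rw [pow_zero, one_mul] at hzb; exact absurd (hzb ▸ hz0) hb0
    | succ m => exact hzb ▸ (dvd_mul_of_dvd_left (dvd_pow_self _ (Nat.succ_ne_zero m)) b)

lemma frobeniusEquiv_symm_iterate_coeff_zero (n : ℕ) (x : WittVector p k) :
    (((⇑(WittVector.frobeniusEquiv p k).symm)^[n] x).coeff 0) ^ p ^ n = x.coeff 0 := by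
  induction n generalizing x with
  | zero => simp
  | succ n ih =>
    have h1 : ∀ w : WittVector p k,
        (((WittVector.frobeniusEquiv p k).symm w).coeff 0) ^ p = w.coeff 0 := by
      intro w
      have h2 : WittVector.frobenius ((WittVector.frobeniusEquiv p k).symm w) = w :=
        (WittVector.frobeniusEquiv p k).apply_symm_apply w
      calc (((WittVector.frobeniusEquiv p k).symm w).coeff 0) ^ p
          = (WittVector.frobenius ((WittVector.frobeniusEquiv p k).symm w)).coeff 0 := by
            rw [WittVector.coeff_frobenius_charP]
        _ = w.coeff 0 := by rw [h2]
    rw [Function.iterate_succ_apply, pow_succ, pow_mul, ih, h1]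

lemma frobeniusEquiv_symm_iterate_natCast_mul (j : ℕ) (z : WittVector p k) :
    (⇑(WittVector.frobeniusEquiv p k).symm)^[j] ((p : WittVector p k) * z)
      = (p : WittVector p k) * (⇑(WittVector.frobeniusEquiv p k).symm)^[j] z := by
  induction j generalizing z with
  | zero => rfl
  | succ j ih =>
    rw [Function.iterate_succ_apply, map_mul, map_natCast, Function.iterate_succ_apply, ih]

lemma key_dvd (m : ℕ) : ∀ (X : WittVector p (WittVector p k)) (n : ℕ), m ≤ n →
    (p : WittVector p k) ^ m ∣
      WittVector.map (WittVector.constantCoeff) X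
        - (⇑(WittVector.frobeniusEquiv p k).symm)^[n] (WittVector.ghostComponent n X) := by
  induction m with
  | zero => intro X n _; simpa using one_dvd _
  | succ m ih =>
    intro X n hn
    obtain ⟨n', rfl⟩ : ∃ n', n = n' + 1 := ⟨n - 1, by omega⟩
    set φ := ⇑(WittVector.frobeniusEquiv p k).symm with hφ
    set x₀ := X.coeff 0 with hx₀
    -- decompose X
    have hc0 : (X - WittVector.teichmuller p x₀).coeff 0 = 0 := by
      have : WittVector.constantCoeff (X - WittVector.teichmuller p x₀)
          = x₀ - x₀ := by
        rw [map_sub]; simp [WittVector.constantCoeff_apply, teichmuller_coeff_zero, ← hx₀]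
      simpa using this
    obtain ⟨Y, hY⟩ := exists_verschiebung_eq p (X - WittVector.teichmuller p x₀) hc0
    have hX : X = WittVector.teichmuller p x₀ + WittVector.verschiebung Y := by
      rw [hY]; ring
    -- ghost component
    have hg : WittVector.ghostComponent (n' + 1) X
        = x₀ ^ p ^ (n' + 1) + (p : WittVector p k) * WittVector.ghostComponent n' Y := by
      rw [hX, map_add, WittVector.ghostComponent_teichmuller,
        WittVector.ghostComponent_verschiebung]
    -- projection
    have hm : WittVector.map (WittVector.constantCoeff) X
        = WittVector.teichmuller p (x₀.coeff 0)
          + WittVector.verschiebung (WittVector.map (WittVector.constantCoeff) Y) := by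
      rw [hX, map_add, WittVector.map_teichmuller, WittVector.map_verschiebung,
        WittVector.constantCoeff_apply]
    -- verschiebung = p * φ
    have hV : ∀ w : WittVector p k, WittVector.verschiebung w = (p : WittVector p k) * φ w := by
      intro w
      have := WittVector.frobenius_verschiebung w
      calc WittVector.verschiebung w
          = (WittVector.frobeniusEquiv p k).symm
              (WittVector.frobenius (WittVector.verschiebung w)) :=
            ((WittVector.frobeniusEquiv p k).symm_apply_apply _).symm
        _ = (WittVector.frobeniusEquiv p k).symm (w * p) := by rw [this]
        _ = (p : WittVector p k) * φ w := by rw [map_mul, map_natCast, mul_comm]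
    -- first term
    have hA : (p : WittVector p k) ^ (m + 1) ∣
        WittVector.teichmuller p (x₀.coeff 0) - φ^[n' + 1] (x₀ ^ p ^ (n' + 1)) := by
      have hpow : φ^[n' + 1] (x₀ ^ p ^ (n' + 1)) = (φ^[n' + 1] x₀) ^ p ^ (n' + 1) := by
        rw [hφ]
        exact iterate_map_pow _ _ _ _
      have hdvd := dvd_sub_pow_of_dvd_sub
        (p_dvd_sub_teichmuller p k (φ^[n' + 1] x₀)) (n' + 1)
      have hT : (WittVector.teichmuller p ((φ^[n' + 1] x₀).coeff 0)) ^ p ^ (n' + 1)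
          = WittVector.teichmuller p (x₀.coeff 0) := by
        rw [← MonoidHom.map_pow, frobeniusEquiv_symm_iterate_coeff_zero]
      have : (p : WittVector p k) ^ (n' + 1 + 1) ∣
          WittVector.teichmuller p (x₀.coeff 0) - φ^[n' + 1] (x₀ ^ p ^ (n' + 1)) := by
        rw [hpow, ← hT, ← neg_sub ((φ^[n' + 1] x₀) ^ p ^ (n' + 1))]
        exact dvd_neg.mpr hdvd
      exact dvd_trans (pow_dvd_pow _ (by omega)) this
    -- second term
    have hB : (p : WittVector p k) ^ (m + 1) ∣
        WittVector.verschiebung (WittVector.map (WittVector.constantCoeff) Y)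
          - φ^[n' + 1] ((p : WittVector p k) * WittVector.ghostComponent n' Y) := by
      obtain ⟨w, hw⟩ := ih Y n' (by omega)
      rw [frobeniusEquiv_symm_iterate_natCast_mul, hV, Function.iterate_succ_apply',
        ← mul_sub, ← map_sub, hw]
      rw [map_mul, map_pow, map_natCast]
      exact ⟨(WittVector.frobeniusEquiv p k).symm w, by ring⟩
    have hsum := dvd_add hA hB
    rw [sub_add_sub_comm] at hsum
    rwa [hg, hm, iterate_map_add]

end aux

/-- Let `k` be a perfect field of characteristic `p`. If `X ∈ W(W(k))` has ghost
components `(a_n)`, then the image of `X` under `W(pr₀) : W(W(k)) → W(k)` is the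
`p`-adic limit of the sequence `F^{-n}(a_n)` in `W(k)`. -/
theorem wittVector_projection_eq_limit (p : ℕ) [hp : Fact p.Prime]
    (k : Type*) [Field k] [CharP k p] [PerfectRing k p]
    (X : WittVector p (WittVector p k)) (a : ℕ → WittVector p k)
    (ha : ∀ n : ℕ, WittVector.ghostComponent n X = a n) :
    ∀ m : ℕ, ∃ N : ℕ, ∀ n ≥ N, ∃ y : WittVector p k,
      WittVector.map (WittVector.constantCoeff) X
          - (⇑(WittVector.frobeniusEquiv p k).symm)^[n] (a n)
        = (p : WittVector p k) ^ m * y := by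
  intro m
  refine ⟨m, fun n hn => ?_⟩
  obtain ⟨y, hy⟩ := key_dvd p k m X n hn
  exact ⟨y, by rw [← ha n]; exact hy⟩
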